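/- Let f be a recurrent homeomorphism of the closed annulus A = S¹ × [0,1] that preserves each boundary component and preserves orientation. If a lift F of f to the universal cover ℝ × [0,1] has a fixed point, then F is recurrent, and consequently F is the identity on each boundary line ℝ × {0} and ℝ × {1}. -/

import Mathlib

open Filter Topology Metric

namespace AnnulusAux

noncomputable section

local notation "𝕊" => AddCircle (1:ℝ)

instance : Fact ((0:ℝ) < 1) := ⟨one_pos⟩

lemma coe_eq_coe_of_int {r s : ℝ} (m : ℤ) (hm : r - s = m) : (r : 𝕊) = (s : 𝕊) := by
  rw [QuotientAddGroup.eq_iff_sub_mem]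
  exact AddSubgroup.mem_zmultiples_iff.mpr ⟨m, by rw [zsmul_eq_mul, mul_one, hm]⟩

lemma coe_int_of_eq {r s : ℝ} (h : (r : 𝕊) = (s : 𝕊)) : ∃ m : ℤ, r - s = m := by
  rw [QuotientAddGroup.eq_iff_sub_mem, AddSubgroup.mem_zmultiples_iff] at h
  obtain ⟨m, hm⟩ := h
  exact ⟨m, by simpa using hm.symm⟩

lemma rep_eq {r s : ℝ} (h : (r : 𝕊) = (s : 𝕊)) (h2 : |r - s| < 1) : r = s := by
  obtain ⟨m, hm⟩ := coe_int_of_eq h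
  have hm1 : |(m:ℝ)| < 1 := hm ▸ h2
  have : m = 0 := by
    have : |m| < 1 := by exact_mod_cast hm1
    exact Int.abs_lt_one_iff.mp this
  have : r - s = 0 := by rw [hm, this]; norm_num
  linarith

lemma norm_coe (x : ℝ) : ‖(x : 𝕊)‖ = |x - round x| := by
  rw [AddCircle.norm_eq]; norm_num

lemma coe_sub_round (x : ℝ) : ((x - round x : ℝ) : 𝕊) = (x : 𝕊) := by
  rw [QuotientAddGroup.eq_iff_sub_mem]
  exact AddSubgroup.mem_zmultiples_iff.mpr ⟨-round x, by push_cast [zsmul_eq_mul]; ring⟩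

def lift0 (w : 𝕊) : ℝ := (AddCircle.equivIco 1 (-(1/2)) w : ℝ)

lemma coe_lift0 (w : 𝕊) : ((lift0 w : ℝ) : 𝕊) = w := by
  have h := (AddCircle.equivIco 1 (-(1/2))).symm_apply_apply w
  rwa [AddCircle.equivIco, QuotientAddGroup.equivIcoMod_symm_apply] at h

lemma lift0_mem (w : 𝕊) : lift0 w ∈ Set.Ico (-(1/2):ℝ) (1/2) := by
  have h := Set.mem_Ico.mp (AddCircle.equivIco 1 (-(1/2)) w).2
  unfold lift0
  rw [Set.mem_Ico]
  exact ⟨h.1, by linarith [h.2]⟩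

lemma abs_lift0_le (w : 𝕊) : |lift0 w| ≤ 1/2 := by
  have h := lift0_mem w
  rw [abs_le]
  exact ⟨h.1, h.2.le⟩

lemma abs_lift0_lt {w : 𝕊} {c : ℝ} (hc : c ≤ 1/2) (h : ‖w‖ < c) : |lift0 w| < c := by
  induction w using QuotientAddGroup.induction_on with
  | H x =>
    have hx : ‖((x:ℝ) : 𝕊)‖ = |x - round x| := norm_coe x
    have h1 : ((x - round x : ℝ) : 𝕊) = ((lift0 ((x:ℝ):𝕊) : ℝ) : 𝕊) := by
      rw [coe_lift0, coe_sub_round]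
    have habs : |x - round x| < c := by rwa [hx] at h
    have h2 : x - round x = lift0 ((x:ℝ):𝕊) := by
      refine rep_eq h1 ?_
      have := abs_lift0_le ((x:ℝ):𝕊)
      calc |x - round x - lift0 ((x:ℝ):𝕊)| ≤ |x - round x| + |lift0 ((x:ℝ):𝕊)| := abs_sub _ _
        _ < c + 1/2 := by linarith
        _ ≤ 1 := by linarith
    rw [← h2]; exact habs

def delta (u v : 𝕊) : ℝ := lift0 (v - u)

lemma coe_delta (u v : 𝕊) : ((delta u v : ℝ) : 𝕊) = v - u := coe_lift0 _

lemma abs_delta_le (u v : 𝕊) : |delta u v| ≤ 1/2 := abs_lift0_le _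

lemma abs_delta_lt {u v : 𝕊} {c : ℝ} (hc : c ≤ 1/2) (h : dist u v < c) : |delta u v| < c := by
  refine abs_lift0_lt hc ?_
  rwa [← neg_sub u v, norm_neg, ← dist_eq_norm]

lemma delta_quad {u v u' v' : 𝕊} (h1 : dist u v < 3/16) (h2 : dist v v' < 1/16)
    (h3 : dist u u' < 1/16) :
    delta u v + delta v v' = delta u u' + delta u' v' := by
  have h4 : dist u' v' < 5/16 := by
    have := dist_triangle4 u' u v v'
    have hd : dist u' u = dist u u' := dist_comm _ _
    linarith
  have e1 := abs_delta_lt (by norm_num) h1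
  have e2 := abs_delta_lt (by norm_num) h2
  have e3 := abs_delta_lt (by norm_num) h3
  have e4 := abs_delta_lt (by norm_num) h4
  refine rep_eq ?_ ?_
  · rw [AddCircle.coe_add, AddCircle.coe_add, coe_delta, coe_delta, coe_delta, coe_delta]
    abel
  · calc |delta u v + delta v v' - (delta u u' + delta u' v')|
        ≤ |delta u v| + |delta v v'| + |delta u u'| + |delta u' v'| := by
          have := abs_add_le (delta u v) (delta v v')
          have := abs_add_le (delta u u') (delta u' v')
          have := abs_sub (delta u v + delta v v') (delta u u' + delta u' v')
          linarith [abs_add_le (delta u v) (delta v v'), abs_add_le (delta u u') (delta u' v'),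
            abs_sub (delta u v + delta v v') (delta u u' + delta u' v')]
      _ < 1 := by linarith

lemma round_eq_of_abs_lt {x : ℝ} {m : ℤ} (h : |x - m| < 1/2) : round x = m := by
  rw [round_eq, Int.floor_eq_iff]
  rw [abs_lt] at h
  constructor
  · linarith [h.1]
  · linarith [h.2]

lemma round_const {X : Type*} [TopologicalSpace X] [PreconnectedSpace X] {g : X → ℝ}
    (hg : Continuous g) (h : ∀ x, |g x - round (g x)| < 1/4) (x y : X) :
    round (g x) = round (g y) := by
  have hl : IsLocallyConstant fun z => round (g z) := by
    rw [IsLocallyConstant.iff_eventually_eq]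
    intro z
    have hev : ∀ᶠ z' in 𝓝 z, dist (g z') (g z) < 1/4 :=
      (Metric.tendsto_nhds.mp (hg.tendsto z)) (1/4) (by norm_num)
    filter_upwards [hev] with z' hz'
    refine round_eq_of_abs_lt ?_
    rw [Real.dist_eq] at hz'
    have := h z
    calc |g z' - (round (g z) : ℝ)| ≤ |g z' - g z| + |g z - round (g z)| := by
          have := abs_add_le (g z' - g z) (g z - round (g z))
          simpa [sub_add_sub_cancel] using this
      _ < 1/2 := by linarith
  exact hl.apply_eq_of_preconnectedSpace x y

lemma iterate_ge_of_le {g : ℝ → ℝ} (hg : Monotone g) {x : ℝ} (hx : x ≤ g x) {m : ℕ}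
    (hm : 1 ≤ m) : g x ≤ g^[m] x := by
  have hmono : Monotone fun m => g^[m] x := by
    refine monotone_nat_of_le_succ fun m => ?_
    rw [Function.iterate_succ_apply]
    exact (hg.iterate m) hx
  simpa using hmono hm

lemma iterate_le_of_ge {g : ℝ → ℝ} (hg : Monotone g) {x : ℝ} (hx : g x ≤ x) {m : ℕ}
    (hm : 1 ≤ m) : g^[m] x ≤ g x := by
  have hmono : Antitone fun m => g^[m] x := by
    refine antitone_nat_of_succ_le fun m => ?_
    rw [Function.iterate_succ_apply]
    exact (hg.iterate m) hx
  simpa using hmono hm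

end

end AnnulusAux


/-- `f` is recurrent with respect to the metric `m`: some sequence of iterates
`f^[n k]` with `n k → ∞` converges uniformly to the identity. -/
def RecurrentWith {X : Type*} (m : MetricSpace X) (f : X → X) : Prop :=
  ∃ n : ℕ → ℕ, Filter.Tendsto n Filter.atTop Filter.atTop ∧
    ∀ ε > 0, ∀ᶠ k in Filter.atTop, ∀ x, @dist X m.toDist (f^[n k] x) x < ε

/-- `f` is a recurrent map of the metric space `X`. -/
def IsRecurrent {X : Type*} [m : MetricSpace X] (f : X → X) : Prop :=
  RecurrentWith m f

/-- The closed annulus. -/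
abbrev Annulus2 := AddCircle (1 : ℝ) × (Set.Icc (0 : ℝ) 1)

/-- The universal cover of the annulus. -/
abbrev AnnulusCover := ℝ × (Set.Icc (0 : ℝ) 1)

/-- The covering projection of the annulus. -/
noncomputable def annulusProj (p : AnnulusCover) : Annulus2 := ((p.1 : AddCircle (1 : ℝ)), p.2)

/-- If a recurrent homeomorphism of the closed annulus preserves each boundary
component and preserves orientation (equivalently, under the previous condition,
is homotopic to the identity), then any lift to the universal cover having a
fixed point is recurrent, and is the identity on each boundary line. -/
theorem annulus_lift_recurrent (f : Annulus2 ≃ₜ Annulus2)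
    (hrec : IsRecurrent (f : Annulus2 → Annulus2))
    (hbd : ∀ p : Annulus2, (((p.2 : ℝ) = 0 → (((f p).2 : ℝ) = 0)) ∧
      ((p.2 : ℝ) = 1 → (((f p).2 : ℝ) = 1))))
    (hor : ContinuousMap.Homotopic ⟨f, f.continuous⟩ (ContinuousMap.id Annulus2))
    (F : AnnulusCover ≃ₜ AnnulusCover)
    (hlift : ∀ p, annulusProj (F p) = f (annulusProj p))
    (hfix : ∃ p, F p = p) :
    IsRecurrent (F : AnnulusCover → AnnulusCover) ∧
      ∀ p : AnnulusCover, ((p.2 : ℝ) = 0 ∨ (p.2 : ℝ) = 1) → F p = p := by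

  classical
  obtain ⟨n, hn, hne⟩ := hrec
  obtain ⟨p₀, hp₀⟩ := hfix
  haveI : PreconnectedSpace (Set.Icc (0:ℝ) 1) := Subtype.preconnectedSpace isPreconnected_Icc
  have hproj_fst : ∀ q : AnnulusCover,
      (((F q).1 : ℝ) : AddCircle (1:ℝ)) = (f (annulusProj q)).1 :=
    fun q => congrArg Prod.fst (hlift q)
  have hproj_snd : ∀ q : AnnulusCover, (F q).2 = (f (annulusProj q)).2 :=
    fun q => congrArg Prod.snd (hlift q)
  have hiterlift : ∀ (N : ℕ) (q : AnnulusCover),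
      annulusProj ((⇑F)^[N] q) = (⇑f)^[N] (annulusProj q) := by
    intro N
    induction N with
    | zero => intro q; simp
    | succ N ih =>
      intro q
      rw [Function.iterate_succ_apply, Function.iterate_succ_apply, ih, hlift]
  -- Part 1 : recurrence of F
  have main : ∀ ε > 0, ∀ᶠ k in atTop, ∀ p : AnnulusCover, dist ((⇑F)^[n k] p) p < ε := by
    intro ε hε
    set ε' := min ε (1/4) with hε'def
    have hε'pos : 0 < ε' := lt_min hε (by norm_num)
    have hε'le : ε' ≤ 1/4 := min_le_right _ _
    have hε'leε : ε' ≤ ε := min_le_left _ _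
    filter_upwards [hne ε' hε'pos] with k hk
    intro p
    set N := n k with hNdef
    set mfun : AnnulusCover → ℝ := fun q => ((⇑F)^[N] q).1 - q.1 with hmfun
    have hmc : Continuous mfun :=
      (continuous_fst.comp (F.continuous.iterate N)).sub continuous_fst
    have happrox : ∀ q : AnnulusCover, |mfun q - round (mfun q)| < ε' ∧
        dist (((⇑F)^[N] q).2 : ℝ) ((q.2 : ℝ)) < ε' := by
      intro q
      have h := hk (annulusProj q)
      rw [← hiterlift N q, Prod.dist_eq, max_lt_iff] at h
      constructor
      · have h1 : dist ((((⇑F)^[N] q).1 : ℝ) : AddCircle (1:ℝ))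
            (((q.1 : ℝ) : AddCircle (1:ℝ))) < ε' := h.1
        rw [dist_eq_norm, ← QuotientAddGroup.mk_sub, AnnulusAux.norm_coe] at h1
        exact h1
      · have h2 : dist (((⇑F)^[N] q).2) (q.2) < ε' := h.2
        rwa [Subtype.dist_eq] at h2
    have hround0 : round (mfun p) = 0 := by
      have hcst := AnnulusAux.round_const hmc
        (fun q => lt_of_lt_of_le (happrox q).1 hε'le) p p₀
      have hm0 : mfun p₀ = 0 := by
        rw [hmfun]
        simp [Function.iterate_fixed hp₀]
      rw [hcst, hm0, round_zero]
    have h1 := (happrox p).1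
    rw [hround0] at h1
    simp only [Int.cast_zero, sub_zero] at h1
    rw [Prod.dist_eq, max_lt_iff]
    constructor
    · rw [Real.dist_eq]
      exact lt_of_lt_of_le h1 hε'leε
    · rw [Subtype.dist_eq]
      exact lt_of_lt_of_le (happrox p).2 hε'leε
  -- deck transformation constant
  have hTproj : ∀ q : AnnulusCover, annulusProj (q.1 + 1, q.2) = annulusProj q := by
    intro q
    unfold annulusProj
    rw [Prod.mk.injEq]
    refine ⟨?_, rfl⟩
    exact AnnulusAux.coe_eq_coe_of_int 1 (by push_cast; ring)
  set dfun : AnnulusCover → ℝ := fun q => (F (q.1 + 1, q.2)).1 - (F q).1 with hdfun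
  have hdc : Continuous dfun := by
    apply Continuous.sub
    · exact continuous_fst.comp (F.continuous.comp
        ((continuous_fst.add continuous_const).prodMk continuous_snd))
    · exact continuous_fst.comp F.continuous
  have hd_int : ∀ q : AnnulusCover, ∃ m : ℤ, dfun q = m := by
    intro q
    have h1 : (((F (q.1+1, q.2)).1 : ℝ) : AddCircle (1:ℝ))
        = (((F q).1 : ℝ) : AddCircle (1:ℝ)) := by
      rw [hproj_fst, hproj_fst, hTproj]
    obtain ⟨m, hm⟩ := AnnulusAux.coe_int_of_eq h1
    exact ⟨m, hm⟩
  have hd_round : ∀ q, |dfun q - round (dfun q)| < 1/4 := by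
    intro q
    obtain ⟨m, hm⟩ := hd_int q
    rw [hm, round_intCast, sub_self]
    norm_num
  have hd_const : ∀ q q' : AnnulusCover, dfun q = dfun q' := by
    intro q q'
    obtain ⟨m, hm⟩ := hd_int q
    obtain ⟨m', hm'⟩ := hd_int q'
    have hcst := AnnulusAux.round_const hdc hd_round q q'
    rw [hm, hm', round_intCast, round_intCast] at hcst
    rw [hm, hm']
    exact_mod_cast hcst
  -- the winding-number argument : the deck constant is 1
  obtain ⟨H⟩ := hor
  set c0 : Set.Icc (0:ℝ) 1 := ⟨0, by norm_num⟩ with hc0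
  set Γc : unitInterval → AddCircle (1:ℝ) → AddCircle (1:ℝ) :=
    fun t u => (H (t, (u, c0))).1 with hΓc
  set gfun : ℝ → ℝ := fun x => (F (x, c0)).1 with hgfun
  have hg0 : ∀ x : ℝ, Γc 0 (((x : ℝ)) : AddCircle (1:ℝ)) = ((gfun x : ℝ) : AddCircle (1:ℝ)) := by
    intro x
    show (H (0, (((x:ℝ) : AddCircle (1:ℝ)), c0))).1 = _
    rw [H.apply_zero]
    exact (hproj_fst (x, c0)).symm
  have hg1 : ∀ u : AddCircle (1:ℝ), Γc 1 u = u := by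
    intro u
    show (H (1, (u, c0))).1 = u
    rw [H.apply_one]
    rfl
  have hΦc : Continuous fun q : unitInterval × Set.Icc (0:ℝ) 1 =>
      Γc q.1 (((q.2 : ℝ) : AddCircle (1:ℝ))) := by
    refine continuous_fst.comp (H.continuous.comp ?_)
    exact continuous_fst.prodMk ((((AddCircle.continuous_mk' 1).comp
      continuous_subtype_val).comp continuous_snd).prodMk continuous_const)
  have hΦu := CompactSpace.uniformContinuous_of_continuous hΦc
  rw [Metric.uniformContinuous_iff] at hΦu
  obtain ⟨δ₁, hδ₁pos, hδ₁⟩ := hΦu (1/16) (by norm_num)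
  have hgcont : Continuous gfun := continuous_fst.comp (F.continuous.comp
      (continuous_id.prodMk continuous_const))
  have hgU := CompactSpace.uniformContinuous_of_continuous
      (hgcont.comp (continuous_subtype_val : Continuous ((↑) : Set.Icc (0:ℝ) 1 → ℝ)))
  rw [Metric.uniformContinuous_iff] at hgU
  obtain ⟨δ₂, hδ₂pos, hδ₂⟩ := hgU (1/2) (by norm_num)
  set δ := min δ₁ δ₂ with hδdef
  have hδpos : 0 < δ := lt_min hδ₁pos hδ₂pos
  obtain ⟨N, hNgt⟩ := exists_nat_gt (max 3 (1/δ))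
  have hN3 : (3:ℝ) < N := lt_of_le_of_lt (le_max_left _ _) hNgt
  have hNpos : (0:ℝ) < N := by linarith
  have hNne : (N:ℝ) ≠ 0 := ne_of_gt hNpos
  have hNδ : 1/(N:ℝ) < δ := by
    rw [div_lt_iff₀ hNpos]
    have h1 : 1/δ < N := lt_of_le_of_lt (le_max_right _ _) hNgt
    rw [div_lt_iff₀ hδpos] at h1
    linarith
  set xj : ℕ → ℝ := fun j => (j:ℝ)/N with hxj
  have hmem : ∀ j : ℕ, j ≤ N → xj j ∈ Set.Icc (0:ℝ) 1 := by
    intro j hj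
    constructor
    · positivity
    · rw [hxj]
      rw [div_le_one hNpos]
      exact_mod_cast hj
  have hsub : ∀ j : ℕ, xj (j+1) - xj j = 1/N := by
    intro j
    rw [hxj]
    push_cast
    field_simp
    ring
  set Gt : unitInterval → ℕ → AddCircle (1:ℝ) :=
    fun t j => Γc t ((xj j : ℝ) : AddCircle (1:ℝ)) with hGt
  have hmesh : ∀ (t : unitInterval) (j : ℕ), j < N → dist (Gt t j) (Gt t (j+1)) < 1/16 := by
    intro t j hj
    have hdS : dist (⟨xj j, hmem j hj.le⟩ : Set.Icc (0:ℝ) 1) ⟨xj (j+1), hmem (j+1) hj⟩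
        = 1/N := by
      rw [Subtype.dist_eq]
      show dist (xj j) (xj (j+1)) = 1/N
      rw [Real.dist_eq, abs_sub_comm, hsub j, abs_of_pos (by positivity)]
    have h := hδ₁ (a := (t, ⟨xj j, hmem j hj.le⟩)) (b := (t, ⟨xj (j+1), hmem (j+1) hj⟩)) ?_
    · exact h
    · rw [Prod.dist_eq, dist_self, hdS]
      exact max_lt hδ₁pos (lt_of_lt_of_le hNδ (min_le_left _ _))
  have hpert : ∀ t t' : unitInterval, dist t t' < δ → ∀ j : ℕ, j ≤ N →
      dist (Gt t j) (Gt t' j) < 1/16 := by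
    intro t t' htt j hj
    have h := hδ₁ (a := (t, ⟨xj j, hmem j hj⟩)) (b := (t', ⟨xj j, hmem j hj⟩)) ?_
    · exact h
    · rw [Prod.dist_eq, dist_self]
      exact max_lt (lt_of_lt_of_le htt (min_le_left _ _)) hδ₁pos
  have hxN : xj N = 1 := by rw [hxj]; exact div_self hNne
  have hx0 : xj 0 = 0 := by rw [hxj]; norm_num
  have hGtper : ∀ t : unitInterval, Gt t N = Gt t 0 := by
    intro t
    show Γc t _ = Γc t _
    congr 1
    rw [hxN, hx0]
    exact AnnulusAux.coe_eq_coe_of_int 1 (by push_cast; ring)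
  set w : unitInterval → ℝ :=
    fun t => ∑ j ∈ Finset.range N, AnnulusAux.delta (Gt t j) (Gt t (j+1)) with hw
  have hwloc : ∀ t t' : unitInterval, dist t t' < δ → w t = w t' := by
    intro t t' htt
    have key : w t' = w t + ∑ j ∈ Finset.range N,
        (AnnulusAux.delta (Gt t (j+1)) (Gt t' (j+1)) - AnnulusAux.delta (Gt t j) (Gt t' j)) := by
      simp only [hw]
      rw [← Finset.sum_add_distrib]
      refine Finset.sum_congr rfl ?_
      intro j hj
      rw [Finset.mem_range] at hj
      have hq := AnnulusAux.delta_quad (u := Gt t j) (v := Gt t (j+1)) (u' := Gt t' j)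
        (v' := Gt t' (j+1)) ((hmesh t j hj).trans (by norm_num))
        (hpert t t' htt (j+1) hj) (hpert t t' htt j hj.le)
      linarith
    rw [Finset.sum_range_sub (fun j => AnnulusAux.delta (Gt t j) (Gt t' j)) N] at key
    rw [hGtper t, hGtper t', sub_self, add_zero] at key
    exact key.symm
  have hwint : ∀ t : unitInterval, ∃ m : ℤ, w t = m := by
    intro t
    have hmapsum : ((w t : ℝ) : AddCircle (1:ℝ))
        = ∑ j ∈ Finset.range N,
          ((AnnulusAux.delta (Gt t j) (Gt t (j+1)) : ℝ) : AddCircle (1:ℝ)) := by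
      simp only [hw]
      exact map_sum (QuotientAddGroup.mk' (AddSubgroup.zmultiples (1:ℝ))) _ _
    have hterm : ∀ j ∈ Finset.range N,
        ((AnnulusAux.delta (Gt t j) (Gt t (j+1)) : ℝ) : AddCircle (1:ℝ))
        = Gt t (j+1) - Gt t j := fun j _ => AnnulusAux.coe_delta _ _
    rw [Finset.sum_congr rfl hterm, Finset.sum_range_sub (fun j => Gt t j) N,
      hGtper t, sub_self] at hmapsum
    rw [show (0 : AddCircle (1:ℝ)) = ((0:ℝ) : AddCircle (1:ℝ))
      from (QuotientAddGroup.mk_zero _).symm] at hmapsum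
    obtain ⟨m, hm⟩ := AnnulusAux.coe_int_of_eq hmapsum
    exact ⟨m, by linarith⟩
  have hw1 : w 1 = 1 := by
    simp only [hw]
    have hterm : ∀ j ∈ Finset.range N,
        AnnulusAux.delta (Gt 1 j) (Gt 1 (j+1)) = 1/N := by
      intro j _
      have hu : Gt 1 j = ((xj j : ℝ) : AddCircle (1:ℝ)) := hg1 _
      have hv : Gt 1 (j+1) = ((xj (j+1) : ℝ) : AddCircle (1:ℝ)) := hg1 _
      rw [hu, hv]
      refine AnnulusAux.rep_eq ?_ ?_
      · rw [AnnulusAux.coe_delta, ← QuotientAddGroup.mk_sub]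
        congr 1
        exact hsub j
      · have h1 := AnnulusAux.abs_delta_le ((xj j : ℝ) : AddCircle (1:ℝ))
          ((xj (j+1) : ℝ) : AddCircle (1:ℝ))
        have h3 : 1/(N:ℝ) ≤ 1/3 := by
          apply one_div_le_one_div_of_le (by norm_num)
          linarith
        have h2 : (0:ℝ) < 1/N := by positivity
        have h4 := abs_sub (AnnulusAux.delta ((xj j : ℝ) : AddCircle (1:ℝ))
          ((xj (j+1) : ℝ) : AddCircle (1:ℝ))) (1/(N:ℝ))
        rw [abs_of_pos h2] at h4
        linarith
    rw [Finset.sum_congr rfl hterm, Finset.sum_const, Finset.card_range, nsmul_eq_mul]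
    field_simp
  have hw0 : w 0 = dfun ((0:ℝ), c0) := by
    simp only [hw]
    have hterm : ∀ j ∈ Finset.range N,
        AnnulusAux.delta (Gt 0 j) (Gt 0 (j+1)) = gfun (xj (j+1)) - gfun (xj j) := by
      intro j hj
      rw [Finset.mem_range] at hj
      have hu : Gt 0 j = ((gfun (xj j) : ℝ) : AddCircle (1:ℝ)) := hg0 _
      have hv : Gt 0 (j+1) = ((gfun (xj (j+1)) : ℝ) : AddCircle (1:ℝ)) := hg0 _
      have hgdiff : |gfun (xj (j+1)) - gfun (xj j)| < 1/2 := by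
        have h := hδ₂ (a := (⟨xj (j+1), hmem (j+1) hj⟩ : Set.Icc (0:ℝ) 1))
          (b := ⟨xj j, hmem j hj.le⟩) ?_
        · rw [Real.dist_eq] at h
          exact h
        · rw [Subtype.dist_eq]
          show dist (xj (j+1)) (xj j) < δ₂
          rw [Real.dist_eq, hsub j, abs_of_pos (by positivity)]
          exact lt_of_lt_of_le hNδ (min_le_right _ _)
      rw [hu, hv]
      refine AnnulusAux.rep_eq ?_ ?_
      · rw [AnnulusAux.coe_delta, ← QuotientAddGroup.mk_sub]
      · have h1 := AnnulusAux.abs_delta_le ((gfun (xj j) : ℝ) : AddCircle (1:ℝ))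
          ((gfun (xj (j+1)) : ℝ) : AddCircle (1:ℝ))
        have h4 := abs_sub (AnnulusAux.delta ((gfun (xj j) : ℝ) : AddCircle (1:ℝ))
          ((gfun (xj (j+1)) : ℝ) : AddCircle (1:ℝ))) (gfun (xj (j+1)) - gfun (xj j))
        linarith
    rw [Finset.sum_congr rfl hterm, Finset.sum_range_sub (fun j => gfun (xj j)) N]
    rw [hxN, hx0, hdfun]
    show gfun 1 - gfun 0 = (F ((0:ℝ) + 1, c0)).1 - (F ((0:ℝ), c0)).1
    rw [zero_add]
  have hwconst : w 0 = w 1 := by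
    have hlc : IsLocallyConstant w := by
      rw [IsLocallyConstant.iff_eventually_eq]
      intro t
      filter_upwards [Metric.ball_mem_nhds t hδpos] with t' ht'
      exact (hwloc t t' (by rwa [Metric.mem_ball, dist_comm] at ht')).symm
    haveI : PreconnectedSpace unitInterval := Subtype.preconnectedSpace isPreconnected_Icc
    exact hlc.apply_eq_of_preconnectedSpace 0 1
  have hκ : dfun ((0:ℝ), c0) = 1 := by rw [← hw0, hwconst, hw1]
  have hdeck : ∀ q : AnnulusCover, (F (q.1 + 1, q.2)).1 = (F q).1 + 1 := by
    intro q
    have hq := hd_const q ((0:ℝ), c0)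
    rw [hκ] at hq
    have : (F (q.1 + 1, q.2)).1 - (F q).1 = 1 := hq
    linarith
  -- the boundary argument
  have bdry : ∀ b : Set.Icc (0:ℝ) 1, (∀ x : ℝ, (F (x, b)).2 = b) → ∀ x : ℝ, F (x, b) = (x, b) := by
    intro b hb x
    set g : ℝ → ℝ := fun y => (F (y, b)).1 with hgdef
    have hgF : ∀ y : ℝ, F (y, b) = (g y, b) := fun y => Prod.ext rfl (hb y)
    have hgc : Continuous g :=
      continuous_fst.comp (F.continuous.comp (continuous_id.prodMk continuous_const))
    have hginj : Function.Injective g := by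
      intro a a' hga
      have hFa : F (a, b) = F (a', b) := by rw [hgF, hgF, hga]
      have := F.injective hFa
      simpa using congrArg Prod.fst this
    have hmono : StrictMono g := by
      rcases hgc.strictMono_of_inj hginj with hsm | hsa
      · exact hsm
      · exfalso
        have h1 : g (0 + 1) = g 0 + 1 := hdeck ((0:ℝ), b)
        have h2 := hsa (show (0:ℝ) < 0 + 1 by norm_num)
        rw [h1] at h2
        linarith
    have hiter : ∀ m : ℕ, (⇑F)^[m] (x, b) = (g^[m] x, b) := by
      intro m
      induction m with
      | zero => simp
      | succ m ih =>
        rw [Function.iterate_succ_apply', Function.iterate_succ_apply', ih, hgF]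
    have hdistf : ∀ m : ℕ, dist (g^[m] x) x ≤ dist (((g^[m] x, b)) : AnnulusCover) (x, b) := by
      intro m
      rw [Prod.dist_eq]
      exact le_max_left _ _
    rcases lt_trichotomy (g x) x with hlt | heq | hgt
    · exfalso
      obtain ⟨k, hk1, hk2⟩ :=
        ((main (x - g x) (by linarith)).and (hn.eventually_ge_atTop 1)).exists
      have hd := hk1 (x, b)
      rw [hiter (n k)] at hd
      have hle : g^[n k] x ≤ g x :=
        AnnulusAux.iterate_le_of_ge hmono.monotone (le_of_lt hlt) hk2
      have habs : x - g^[n k] x ≤ dist (g^[n k] x) x := by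
        rw [Real.dist_eq, abs_sub_comm]
        exact le_abs_self _
      have := hdistf (n k)
      linarith
    · rw [hgF x, heq]
    · exfalso
      obtain ⟨k, hk1, hk2⟩ :=
        ((main (g x - x) (by linarith)).and (hn.eventually_ge_atTop 1)).exists
      have hd := hk1 (x, b)
      rw [hiter (n k)] at hd
      have hle : g x ≤ g^[n k] x :=
        AnnulusAux.iterate_ge_of_le hmono.monotone (le_of_lt hgt) hk2
      have habs : g^[n k] x - x ≤ dist (g^[n k] x) x := by
        rw [Real.dist_eq]
        exact le_abs_self _
      have := hdistf (n k)
      linarith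
  refine ⟨⟨n, hn, main⟩, ?_⟩
  intro p hp
  have hps : ∀ (c : ℝ), (p.2 : ℝ) = c →
      ((∀ q : Annulus2, (q.2 : ℝ) = c → ((f q).2 : ℝ) = c)) → F p = p := by
    intro c hc hfc
    have hb : ∀ x : ℝ, (F (x, p.2)).2 = p.2 := by
      intro x
      apply Subtype.ext
      have h1 : ((f (annulusProj (x, p.2))).2 : ℝ) = c := hfc _ hc
      have h2 : (F (x, p.2)).2 = (f (annulusProj (x, p.2))).2 := hproj_snd (x, p.2)
      rw [h2, h1, hc]
    have := bdry p.2 hb p.1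
    simpa using this
  rcases hp with h0 | h1
  · exact hps 0 h0 (fun q hq => (hbd q).1 hq)
  · exact hps 1 h1 (fun q hq => (hbd q).2 hq)
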